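/- For all integers m, n ≥ 0 with p = 2m+n ≥ 2 and every integer k ≥ 3, there exists an (m,n)-colored mixed graph H whose underlying simple graph has acyclic chromatic number at most k and such that χ_{(m,n)}(H) ≥ k·p^{k-1}. -/

import Mathlib

/-- The possible kinds of links from a vertex `u` to a vertex `v` in an
`(m,n)`-colored mixed graph: an arc `u → v` of one of `m` colors, an arc
`v → u` of one of `m` colors, or an (unoriented) edge of one of `n` colors. -/
inductive Link (m n : ℕ) : Type where
  | arcOut : Fin m → Link m n
  | arcIn : Fin m → Link m n
  | edge : Fin n → Link m n

/-- The link as seen from the other endpoint. -/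
def Link.flip {m n : ℕ} : Link m n → Link m n
  | .arcOut c => .arcIn c
  | .arcIn c => .arcOut c
  | .edge c => .edge c

/-- An `(m,n)`-colored mixed graph on vertex type `V`: between any two distinct
vertices there is at most one link (a colored arc in either direction or a
colored edge), and there are no loops. -/
structure CMGraph (m n : ℕ) (V : Type) where
  link : V → V → Option (Link m n)
  symm : ∀ u v, link v u = (link u v).map Link.flip
  loopless : ∀ v, link v v = none

/-- The underlying simple graph of an `(m,n)`-colored mixed graph. -/
def CMGraph.underlying {m n : ℕ} {V : Type} (G : CMGraph m n V) : SimpleGraph V where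
  Adj u v := (G.link u v).isSome
  symm := by
    constructor
    intro u v h
    try beta_reduce at h ⊢
    rw [G.symm u v]
    rcases hx : G.link u v with _ | l
    · rw [hx] at h; simp at h
    · simp
  loopless := by
    constructor
    intro v h
    try beta_reduce at h ⊢
    rw [G.loopless v] at h
    simp at h

/-- A homomorphism of `(m,n)`-colored mixed graphs: arcs map to arcs of the same
color and direction, edges map to edges of the same color. -/
def IsCMHom {m n : ℕ} {V W : Type} (G : CMGraph m n V) (H : CMGraph m n W)
    (f : V → W) : Prop :=
  ∀ u v l, G.link u v = some l → H.link (f u) (f v) = some l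

/-- `G` admits a homomorphism to some `(m,n)`-colored mixed graph on at most `k`
vertices, i.e. `χ_{(m,n)}(G) ≤ k`. -/
def CMChromAtMost {m n : ℕ} {V : Type} (G : CMGraph m n V) (k : ℕ) : Prop :=
  ∃ (W : Type) (inst : Fintype W) (H : CMGraph m n W) (f : V → W),
    @Fintype.card W inst ≤ k ∧ IsCMHom G H f

/-- Every `(m,n)`-colored mixed graph admitting a homomorphism from `G` has at
least `k` vertices, i.e. `χ_{(m,n)}(G) ≥ k`. -/
def CMChromAtLeast {m n : ℕ} {V : Type} (G : CMGraph m n V) (k : ℕ) : Prop :=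
  ∀ (W : Type) (inst : Fintype W) (H : CMGraph m n W) (f : V → W),
    IsCMHom G H f → k ≤ @Fintype.card W inst

/-- The acyclic chromatic number of `G` is at most `k`: there is a proper
`k`-coloring in which the union of any two color classes induces a forest. -/
def AcycChromAtMost {V : Type} (G : SimpleGraph V) (k : ℕ) : Prop :=
  ∃ c : V → Fin k, (∀ u v, G.Adj u v → c u ≠ c v) ∧
    ∀ i j : Fin k, (G.induce {v | c v = i ∨ c v = j}).IsAcyclic

/-- The edge set of `G` can be decomposed into `r` forests. -/
def ArbAtMost {V : Type} (G : SimpleGraph V) (r : ℕ) : Prop :=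
  ∃ F : Fin r → SimpleGraph V,
    (∀ i, F i ≤ G) ∧
    (∀ i, (F i).IsAcyclic) ∧
    (∀ u v, G.Adj u v → ∃ i, (F i).Adj u v) ∧
    (∀ i j, i ≠ j → ∀ u v, ¬ ((F i).Adj u v ∧ (F j).Adj u v))

/-- Every vertex of `G` has degree at most `d`. -/
def MaxDegAtMost {V : Type} (G : SimpleGraph V) (d : ℕ) : Prop :=
  ∀ v, (G.neighborSet v).ncard ≤ d

/-- `G` is `d`-degenerate: every nonempty (induced) subgraph has a vertex of
degree at most `d` in it. -/
def DegenAtMost {V : Type} (G : SimpleGraph V) (d : ℕ) : Prop :=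
  ∀ s : Set V, s.Nonempty → ∃ v ∈ s, (G.neighborSet v ∩ s).ncard ≤ d

/-! ### Auxiliary material for the proof -/

section Aux

open SimpleGraph

/-- A graph admitting a rank function in which every vertex has at most one
lower-rank neighbor and adjacent vertices have distinct ranks is acyclic. -/
lemma acyclic_of_rank {V : Type} {G : SimpleGraph V} (r : V → ℕ)
    (hne : ∀ u v, G.Adj u v → r u ≠ r v)
    (huniq : ∀ v u1 u2, G.Adj v u1 → G.Adj v u2 → r u1 < r v → r u2 < r v → u1 = u2) :
    G.IsAcyclic := by
  classical
  have key : ∀ (v : V) (c : G.Walk v v), c.IsCycle → (∀ y ∈ c.support, r y ≤ r v) → False := by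
    intro v c hcy hbnd
    cases c with
    | nil => exact Walk.IsCycle.not_of_nil hcy
    | @cons _ b _ hadj q =>
      rw [Walk.cons_isCycle_iff] at hcy
      obtain ⟨hq, hedge⟩ := hcy
      cases hqr : q.reverse with
      | nil =>
        have : q.length = 0 := by
          have := congrArg Walk.length hqr
          simpa using this
        cases q with
        | nil => exact G.irrefl hadj
        | cons _ _ => simp [Walk.length_cons] at this
      | @cons _ w _ hadj2 q2 =>
        have hw_mem : w ∈ q.support := by
          have hmem : w ∈ q.reverse.support := by
            rw [hqr, Walk.support_cons]
            exact List.mem_cons_of_mem _ q2.start_mem_support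
          rwa [Walk.support_reverse, List.mem_reverse] at hmem
        have hb_mem : b ∈ q.support := q.start_mem_support
        have hbnd' : ∀ y ∈ q.support, r y ≤ r v := by
          intro y hy
          exact hbnd y (by rw [Walk.support_cons]; exact List.mem_cons_of_mem _ hy)
        have hrb : r b < r v :=
          lt_of_le_of_ne (hbnd' b hb_mem) (Ne.symm (hne v b hadj))
        have hrw : r w < r v :=
          lt_of_le_of_ne (hbnd' w hw_mem) (Ne.symm (hne v w hadj2))
        have hbw : b = w := huniq v b w hadj hadj2 hrb hrw
        apply hedge
        have hmem : s(v, w) ∈ q.reverse.edges := by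
          rw [hqr, Walk.edges_cons]
          exact List.mem_cons_self
        rw [Walk.edges_reverse, List.mem_reverse] at hmem
        have hsb : s(v, b) = s(v, w) := by rw [hbw]
        rw [hsb]
        exact hmem
  intro x c hc
  rcases hh : c.support.argmax r with _ | v
  · rw [List.argmax_eq_none] at hh
    exact absurd c.start_mem_support (by rw [hh]; simp)
  · have hvo : v ∈ c.support.argmax r := by rw [hh]; rfl
    have hv : v ∈ c.support := List.argmax_mem hvo
    have hmax : ∀ y ∈ c.support, r y ≤ r v := fun y hy => List.le_of_mem_argmax hy hvo
    refine key v (c.rotate v hv) (hc.rotate hv) ?_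
    intro y hy
    rw [Walk.support_eq_cons, List.mem_cons] at hy
    rcases hy with rfl | hy
    · exact le_refl _
    · apply hmax
      have hperm := Walk.support_rotate c v hv
      rw [Walk.support_eq_cons c]
      exact List.mem_cons_of_mem _ (hperm.mem_iff.mp hy)

/-- `Link m n` is equivalent to a sum of three `Fin` types. -/
def linkEquiv (m n : ℕ) : Link m n ≃ (Fin m ⊕ Fin m ⊕ Fin n) where
  toFun l := match l with
    | .arcOut c => .inl c
    | .arcIn c => .inr (.inl c)
    | .edge c => .inr (.inr c)
  invFun x := match x with
    | .inl c => .arcOut c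
    | .inr (.inl c) => .arcIn c
    | .inr (.inr c) => .edge c
  left_inv := by rintro (c | c | c) <;> rfl
  right_inv := by rintro (c | c | c) <;> rfl

instance (m n : ℕ) : Fintype (Link m n) := Fintype.ofEquiv _ (linkEquiv m n).symm

instance (m n : ℕ) : DecidableEq (Link m n) := (linkEquiv m n).decidableEq

lemma card_link (m n : ℕ) : Fintype.card (Link m n) = 2 * m + n := by
  rw [Fintype.card_congr (linkEquiv m n)]
  simp [Fintype.card_sum]
  omega

lemma link_flip_flip {m n : ℕ} (l : Link m n) : l.flip.flip = l := by
  cases l <;> rfl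

lemma isSome_map_flip {m n : ℕ} (o : Option (Link m n)) :
    (o.map Link.flip).isSome = o.isSome := by
  cases o <;> rfl

lemma option_map_flip_flip {m n : ℕ} (o : Option (Link m n)) :
    (o.map Link.flip).map Link.flip = o := by
  cases o with
  | none => rfl
  | some l => simp [link_flip_flip]

/-! ### The construction -/

/-- A pattern vertex: a class `i` together with a link type towards each hub. -/
abbrev PatV (m n K : ℕ) : Type := Fin (K + 3) × (Fin (K + 2) → Link m n)

/-- A hub vertex for class `i` and coordinate `r`. -/
abbrev HubV (K : ℕ) : Type := Fin (K + 3) × Fin (K + 2)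

/-- A connector vertex for a pair of patterns in distinct classes. -/
abbrev ConnV (m n K : ℕ) : Type :=
  {q : PatV m n K × PatV m n K // q.1.1 < q.2.1}

/-- The vertex set of the construction. -/
abbrev VtxV (m n K : ℕ) : Type := PatV m n K ⊕ (HubV K ⊕ ConnV m n K)

/-- Link from a pattern to a hub. -/
def hubLink {m n K : ℕ} (u : PatV m n K) (h : HubV K) : Option (Link m n) :=
  if u.1 = h.1 then some (u.2 h.2) else none

/-- Link from a pattern to a connector. -/
def connLink {m n K : ℕ} (l0 l1 : Link m n) (u : PatV m n K) (c : ConnV m n K) :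
    Option (Link m n) :=
  if u = c.1.1 then some l0 else if u = c.1.2 then some l1 else none

/-- The link function of the construction. -/
def Mlink {m n K : ℕ} (l0 l1 : Link m n) : VtxV m n K → VtxV m n K → Option (Link m n)
  | .inl u, .inr (.inl h) => hubLink u h
  | .inr (.inl h), .inl u => (hubLink u h).map Link.flip
  | .inl u, .inr (.inr c) => connLink l0 l1 u c
  | .inr (.inr c), .inl u => (connLink l0 l1 u c).map Link.flip
  | _, _ => none

/-- The colored mixed graph of the construction. -/
def MG (m n K : ℕ) (l0 l1 : Link m n) : CMGraph m n (VtxV m n K) where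
  link := Mlink l0 l1
  symm := by
    rintro (u | h | c) (u' | h' | c') <;>
      simp only [Mlink, option_map_flip_flip, Option.map_none]
  loopless := by rintro (u | h | c) <;> rfl

/-- Choice of a class distinct from two given classes. -/
def thirdClass {K : ℕ} (i j : Fin (K + 3)) : Fin (K + 3) :=
  if (⟨0, by omega⟩ : Fin (K+3)) ≠ i ∧ (⟨0, by omega⟩ : Fin (K+3)) ≠ j then ⟨0, by omega⟩
  else if (⟨1, by omega⟩ : Fin (K+3)) ≠ i ∧ (⟨1, by omega⟩ : Fin (K+3)) ≠ j then ⟨1, by omega⟩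
  else ⟨2, by omega⟩

lemma thirdClass_ne {K : ℕ} (i j : Fin (K + 3)) :
    thirdClass i j ≠ i ∧ thirdClass i j ≠ j := by
  rcases i with ⟨iv, hi⟩
  rcases j with ⟨jv, hj⟩
  unfold thirdClass
  split_ifs with h1 h2
  · exact h1
  · exact h2
  · simp only [ne_eq, Fin.mk.injEq] at h1 h2 ⊢
    omega

/-- The rank function used for acyclicity. -/
def rankV {m n K : ℕ} : VtxV m n K → ℕ
  | .inl _ => 1
  | .inr (.inl _) => 0
  | .inr (.inr _) => 2

/-- The acyclic coloring. -/
def colorV {m n K : ℕ} : VtxV m n K → Fin (K + 3)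
  | .inl u => u.1
  | .inr (.inl h) => h.1.succAbove h.2
  | .inr (.inr c) => thirdClass c.1.1.1 c.1.2.1

end Aux
section Main

variable {m n K : ℕ} {l0 l1 : Link m n}

lemma hubLink_isSome {u : PatV m n K} {h : HubV K} (hs : (hubLink u h).isSome) :
    u.1 = h.1 := by
  unfold hubLink at hs
  split_ifs at hs with hc
  · exact hc
  · simp at hs

lemma connLink_isSome {u : PatV m n K} {c : ConnV m n K}
    (hs : (connLink l0 l1 u c).isSome) : u = c.1.1 ∨ u = c.1.2 := by
  unfold connLink at hs
  split_ifs at hs with h1 h2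
  · exact Or.inl h1
  · exact Or.inr h2
  · simp at hs

lemma proper_color (u v : VtxV m n K) (hadj : (MG m n K l0 l1).underlying.Adj u v) :
    colorV u ≠ colorV v := by
  have h : (Mlink l0 l1 u v).isSome := hadj
  rcases u with p | hb | c
  · rcases v with p' | hb' | c'
    · simp [Mlink] at h
    · -- pattern to hub
      simp only [Mlink] at h
      have he : p.1 = hb'.1 := hubLink_isSome h
      show p.1 ≠ hb'.1.succAbove hb'.2
      rw [he]
      exact Fin.ne_succAbove hb'.1 hb'.2
    · -- pattern to connector
      simp only [Mlink] at h
      have he := connLink_isSome h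
      show p.1 ≠ thirdClass c'.1.1.1 c'.1.2.1
      rcases he with rfl | rfl
      · exact (thirdClass_ne _ _).1.symm
      · exact (thirdClass_ne _ _).2.symm
  · rcases v with p' | hb' | c'
    · -- hub to pattern
      simp only [Mlink, isSome_map_flip] at h
      have he : p'.1 = hb.1 := hubLink_isSome h
      show hb.1.succAbove hb.2 ≠ p'.1
      rw [he]
      exact Fin.succAbove_ne hb.1 hb.2
    · simp [Mlink] at h
    · simp [Mlink] at h
  · rcases v with p' | hb' | c'
    · -- connector to pattern
      simp only [Mlink, isSome_map_flip] at h
      have he := connLink_isSome h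
      show thirdClass c.1.1.1 c.1.2.1 ≠ p'.1
      rcases he with rfl | rfl
      · exact (thirdClass_ne _ _).1
      · exact (thirdClass_ne _ _).2
    · simp [Mlink] at h
    · simp [Mlink] at h

lemma induced_acyclic (a b : Fin (K + 3)) :
    ((MG m n K l0 l1).underlying.induce {v | colorV v = a ∨ colorV v = b}).IsAcyclic := by
  apply acyclic_of_rank (fun v => rankV v.val)
  · -- distinct ranks on edges
    rintro ⟨u, hu⟩ ⟨v, hv⟩ hadj
    have h : (Mlink l0 l1 u v).isSome := hadj
    rcases u with p | hb | c <;> rcases v with p' | hb' | c' <;>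
      (first
        | (simp [Mlink] at h)
        | skip) <;>
      simp [rankV]
  · -- at most one lower-rank neighbor
    rintro ⟨x, hx⟩ ⟨y1, hy1⟩ ⟨y2, hy2⟩ ha1 ha2 hr1 hr2
    have ha1' : (Mlink l0 l1 x y1).isSome := ha1
    have ha2' : (Mlink l0 l1 x y2).isSome := ha2
    apply Subtype.ext
    show y1 = y2
    rcases x with p | hb | c
    · -- x is a pattern: lower neighbors are hubs
      rcases y1 with p1 | hb1 | c1
      · simp [Mlink] at ha1'
      · rcases y2 with p2 | hb2 | c2
        · simp [Mlink] at ha2'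
        · -- both hubs
          simp only [Mlink] at ha1' ha2'
          have e1 : p.1 = hb1.1 := hubLink_isSome ha1'
          have e2 : p.1 = hb2.1 := hubLink_isSome ha2'
          have hx' : p.1 = a ∨ p.1 = b := hx
          have h1' : hb1.1.succAbove hb1.2 = a ∨ hb1.1.succAbove hb1.2 = b := hy1
          have h2' : hb2.1.succAbove hb2.2 = a ∨ hb2.1.succAbove hb2.2 = b := hy2
          have ne1 : hb1.1.succAbove hb1.2 ≠ p.1 := by
            rw [e1]; exact Fin.succAbove_ne _ _
          have ne2 : hb2.1.succAbove hb2.2 ≠ p.1 := by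
            rw [e2]; exact Fin.succAbove_ne _ _
          have hsa : hb1.1.succAbove hb1.2 = hb2.1.succAbove hb2.2 := by
            rcases hx' with h | h <;> rcases h1' with h1' | h1' <;>
              rcases h2' with h2' | h2' <;>
                first
                  | (exact absurd (h1'.trans h.symm) ne1)
                  | (exact absurd (h2'.trans h.symm) ne2)
                  | (rw [h1', h2'])
          have hfst : hb1.1 = hb2.1 := e1.symm.trans e2
          rw [hfst] at hsa
          have hsnd : hb1.2 = hb2.2 := Fin.succAbove_right_injective hsa
          rcases hb1 with ⟨i1, r1⟩
          rcases hb2 with ⟨i2, r2⟩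
          simp only at hfst hsnd
          rw [hfst, hsnd]
        · exact absurd hr2 (by simp [rankV])
      · exact absurd hr1 (by simp [rankV])
    · -- x is a hub: no lower-rank neighbors
      exact absurd hr1 (Nat.not_lt_zero _)
    · -- x is a connector
      rcases y1 with p1 | hb1 | c1
      · rcases y2 with p2 | hb2 | c2
        · -- both patterns
          simp only [Mlink, isSome_map_flip] at ha1' ha2'
          have e1 : p1 = c.1.1 ∨ p1 = c.1.2 := connLink_isSome ha1'
          have e2 : p2 = c.1.1 ∨ p2 = c.1.2 := connLink_isSome ha2'
          have hxc : thirdClass c.1.1.1 c.1.2.1 = a ∨ thirdClass c.1.1.1 c.1.2.1 = b := hx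
          have hne12 : c.1.1.1 ≠ c.1.2.1 := Fin.ne_of_lt c.2
          have hnt1 : thirdClass c.1.1.1 c.1.2.1 ≠ c.1.1.1 := (thirdClass_ne _ _).1
          have hnt2 : thirdClass c.1.1.1 c.1.2.1 ≠ c.1.2.1 := (thirdClass_ne _ _).2
          rcases e1 with rfl | rfl <;> rcases e2 with rfl | rfl
          · rfl
          · exfalso
            have h1' : c.1.1.1 = a ∨ c.1.1.1 = b := hy1
            have h2' : c.1.2.1 = a ∨ c.1.2.1 = b := hy2
            rcases h1' with h1' | h1' <;> rcases h2' with h2' | h2' <;>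
              rcases hxc with hxc | hxc <;>
                first
                  | (exact hne12 (h1'.trans h2'.symm))
                  | (exact hnt1 (hxc.trans h1'.symm))
                  | (exact hnt2 (hxc.trans h2'.symm))
          · exfalso
            have h1' : c.1.2.1 = a ∨ c.1.2.1 = b := hy1
            have h2' : c.1.1.1 = a ∨ c.1.1.1 = b := hy2
            rcases h1' with h1' | h1' <;> rcases h2' with h2' | h2' <;>
              rcases hxc with hxc | hxc <;>
                first
                  | (exact hne12 (h2'.trans h1'.symm))
                  | (exact hnt2 (hxc.trans h1'.symm))
                  | (exact hnt1 (hxc.trans h2'.symm))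
          · rfl
        · simp [Mlink] at ha2'
        · exact absurd hr2 (by simp [rankV])
      · simp [Mlink] at ha1'
      · exact absurd hr1 (by simp [rankV])

lemma mg_chrom_at_least (hl : l0 ≠ l1) :
    CMChromAtLeast (MG m n K l0 l1) ((K + 3) * (2 * m + n) ^ (K + 2)) := by
  intro W inst H f hf
  letI := inst
  have hinj : Function.Injective (fun p : PatV m n K => f (Sum.inl p)) := by
    rintro ⟨i, g⟩ ⟨j, h⟩ heq0
    have heq : f (Sum.inl (i, g)) = f (Sum.inl (j, h)) := heq0
    by_cases hij : i = j
    · subst hij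
      have hg : g = h := by
        funext r
        have k1 := hf (Sum.inl (i, g)) (Sum.inr (Sum.inl (i, r))) (g r)
          (by simp [MG, Mlink, hubLink])
        have k2 := hf (Sum.inl (i, h)) (Sum.inr (Sum.inl (i, r))) (h r)
          (by simp [MG, Mlink, hubLink])
        rw [heq] at k1
        exact Option.some.inj (k1.symm.trans k2)
      rw [hg]
    · rcases lt_or_gt_of_ne hij with hlt | hgt
      · exfalso
        set c : ConnV m n K := ⟨((i, g), (j, h)), hlt⟩ with hc
        have k1 := hf (Sum.inl (i, g)) (Sum.inr (Sum.inr c)) l0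
          (by simp [MG, Mlink, connLink, hc])
        have k2 := hf (Sum.inl (j, h)) (Sum.inr (Sum.inr c)) l1 (by
          show connLink l0 l1 (j, h) c = some l1
          unfold connLink
          rw [if_neg, if_pos rfl]
          intro hcon
          exact hij (congrArg Prod.fst hcon).symm)
        rw [heq] at k1
        exact hl (Option.some.inj (k1.symm.trans k2))
      · exfalso
        set c : ConnV m n K := ⟨((j, h), (i, g)), hgt⟩ with hc
        have k1 := hf (Sum.inl (j, h)) (Sum.inr (Sum.inr c)) l0
          (by simp [MG, Mlink, connLink, hc])
        have k2 := hf (Sum.inl (i, g)) (Sum.inr (Sum.inr c)) l1 (by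
          show connLink l0 l1 (i, g) c = some l1
          unfold connLink
          rw [if_neg, if_pos rfl]
          intro hcon
          exact hij (congrArg Prod.fst hcon))
        rw [heq] at k2
        exact hl (Option.some.inj (k1.symm.trans k2))
  have hcard : Fintype.card (PatV m n K) = (K + 3) * (2 * m + n) ^ (K + 2) := by
    rw [Fintype.card_prod, Fintype.card_fun, Fintype.card_fin, Fintype.card_fin, card_link]
  calc (K + 3) * (2 * m + n) ^ (K + 2) = Fintype.card (PatV m n K) := hcard.symm
    _ ≤ Fintype.card W := Fintype.card_le_of_injective _ hinj

end Main

/-- For `p = 2m+n ≥ 2` and `k ≥ 3` there is an `(m,n)`-colored mixed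
graph whose underlying simple graph has acyclic chromatic number at most `k` and whose
`(m,n)`-colored mixed chromatic number is at least `k·p^(k-1)`. -/
theorem exists_acyclic_k_with_large_mixed_chromatic (m n k : ℕ)
    (hp : 2 ≤ 2 * m + n) (hk : 3 ≤ k) :
    ∃ (V : Type) (_ : Fintype V) (M : CMGraph m n V),
      AcycChromAtMost M.underlying k ∧ CMChromAtLeast M (k * (2 * m + n) ^ (k - 1)) := by
  
  obtain ⟨K, rfl⟩ : ∃ K, k = K + 3 := ⟨k - 3, by omega⟩
  obtain ⟨l0, l1, hl⟩ : ∃ l0 l1 : Link m n, l0 ≠ l1 := by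
    rcases Nat.lt_or_ge 0 m with hm | hm
    · exact ⟨.arcOut ⟨0, hm⟩, .arcIn ⟨0, hm⟩, by intro hcon; cases hcon⟩
    · refine ⟨.edge ⟨0, by omega⟩, .edge ⟨1, by omega⟩, ?_⟩
      intro hcon
      injection hcon with hcon'
      exact absurd (congrArg Fin.val hcon') (by simp)
  refine ⟨VtxV m n K, inferInstance, MG m n K l0 l1, ?_, ?_⟩
  · exact ⟨colorV, proper_color, induced_acyclic⟩
  · have h := mg_chrom_at_least (m := m) (n := n) (K := K) hl
    exact h
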